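/- Let n ≥ 1, R ≥ 0, let Λ = diag(ℓ₀, ℓ₁,…,ℓ_R) ∈ ℝ^{(R+1)×(R+1)} with all ℓ_p ≥ 0, let Φ ∈ ℝ^{n×(R+1)}, let μ ∈ ℝ^{R+1} and let σ > 0. Assume that ‖ (1/σ²) (I + (n/σ²)Λ)^{−1/2} Λ^{1/2} (ΦᵀΦ − nI) Λ^{1/2} (I + (n/σ²)Λ)^{−1/2} ‖₂ < 1. Then Iₙ + (1/σ²) Φ Λ Φᵀ is invertible and (1/(2σ²)) μᵀ Φᵀ (Iₙ + (1/σ²) Φ Λ Φᵀ)^{−1} Φ μ = (n/(2σ²)) μᵀ (I + (n/σ²)Λ)^{−1} μ + ½ Σ_{j=1}^{∞} (−1)^{j+1} E_j, where E_j = μᵀ (1/σ²) (I + (n/σ²)Λ)^{−1} (ΦᵀΦ − nI) [ (1/σ²) (I + (n/σ²)Λ)^{−1} Λ (ΦᵀΦ − nI) ]^{j−1} (I + (n/σ²)Λ)^{−1} μ, and the series converges absolutely. -/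

import Mathlib

open Matrix

/-- The spectral (l2 operator) norm of a square real matrix. -/
noncomputable def opNorm {k : ℕ} (A : Matrix (Fin k) (Fin k) ℝ) : ℝ :=
  ‖Matrix.toEuclideanCLM (𝕜 := ℝ) A‖

/-- The j-th term (for j : ℕ corresponding to the paper's index j+1) of the series in
the decomposition of the data-fit term:
E_{j+1} = μᵀ (1/σ²) B⁻¹ (ΦᵀΦ−nI) [ (1/σ²) B⁻¹ Λ (ΦᵀΦ−nI) ]^j B⁻¹ μ,
where B = I + (n/σ²)Λ. -/
noncomputable def Eterm {n R : ℕ} (ℓ : Fin (R + 1) → ℝ)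
    (Φ : Matrix (Fin n) (Fin (R + 1)) ℝ) (μv : Fin (R + 1) → ℝ) (σ : ℝ) (j : ℕ) : ℝ :=
  μv ⬝ᵥ
    ((((σ ^ 2)⁻¹ •
          ((1 + ((n : ℝ) / σ ^ 2) • Matrix.diagonal ℓ)⁻¹ *
            (Φᵀ * Φ - (n : ℝ) • (1 : Matrix (Fin (R + 1)) (Fin (R + 1)) ℝ)))) *
        (((σ ^ 2)⁻¹ •
            ((1 + ((n : ℝ) / σ ^ 2) • Matrix.diagonal ℓ)⁻¹ * Matrix.diagonal ℓ *
              (Φᵀ * Φ - (n : ℝ) • (1 : Matrix (Fin (R + 1)) (Fin (R + 1)) ℝ)))) ^ j) *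
        (1 + ((n : ℝ) / σ ^ 2) • Matrix.diagonal ℓ)⁻¹) *ᵥ μv)

private lemma mul_pow_succ {M : Type*} [Monoid M] (a b : M) :
    ∀ j : ℕ, (a * b) ^ (j + 1) = a * (b * a) ^ j * b
  | 0 => by simp
  | j + 1 => by
    rw [pow_succ, mul_pow_succ a b j, pow_succ]
    simp only [mul_assoc]

private lemma norm_pow_le'' {A : Type*} [SeminormedRing A] [NormOneClass A] (a : A) (j : ℕ) :
    ‖a ^ j‖ ≤ ‖a‖ ^ j := by
  cases j with
  | zero => simp
  | succ j => exact norm_pow_le' a j.succ_pos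

private lemma geom_aux {A : Type*} [NormedRing A] [NormedAlgebra ℝ A] [CompleteSpace A]
    [NormOneClass A] (c x t m : A) (hm : m = c * x) (htx : x * c = t) (ht : ‖t‖ < 1) :
    Summable (fun j : ℕ => ‖m ^ j‖) ∧ Summable (fun j : ℕ => (-m) ^ j) ∧
      (1 + m) * (∑' j : ℕ, (-m) ^ j) = 1 ∧ (∑' j : ℕ, (-m) ^ j) * (1 + m) = 1 := by
  have hpow : ∀ j : ℕ, m ^ (j + 1) = c * t ^ j * x := by
    intro j; rw [hm, ← htx, mul_pow_succ]
  have hnorm : Summable (fun j : ℕ => ‖m ^ j‖) := by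
    have hle : ∀ j : ℕ, ‖m ^ (j + 1)‖ ≤ (‖c‖ * ‖x‖) * ‖t‖ ^ j := by
      intro j
      rw [hpow j]
      calc ‖c * t ^ j * x‖ ≤ ‖c * t ^ j‖ * ‖x‖ := norm_mul_le _ _
        _ ≤ ‖c‖ * ‖t ^ j‖ * ‖x‖ :=
            mul_le_mul_of_nonneg_right (norm_mul_le _ _) (norm_nonneg _)
        _ ≤ ‖c‖ * ‖t‖ ^ j * ‖x‖ := by
            exact mul_le_mul_of_nonneg_right
              (mul_le_mul_of_nonneg_left (norm_pow_le'' t j) (norm_nonneg _)) (norm_nonneg _)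
        _ = (‖c‖ * ‖x‖) * ‖t‖ ^ j := by ring
    have hgeo : Summable (fun j : ℕ => (‖c‖ * ‖x‖) * ‖t‖ ^ j) :=
      (summable_geometric_of_lt_one (norm_nonneg t) ht).mul_left _
    have h1 : Summable (fun j : ℕ => ‖m ^ (j + 1)‖) :=
      Summable.of_nonneg_of_le (fun j => norm_nonneg _) hle hgeo
    exact (summable_nat_add_iff 1).1 h1
  have hnegnorm : ∀ j : ℕ, ‖(-m) ^ j‖ = ‖m ^ j‖ := by
    intro j
    rw [← neg_one_smul ℝ m, smul_pow, norm_smul]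
    simp
  have hsm : Summable (fun j : ℕ => (-m) ^ j) := by
    refine Summable.of_norm ?_
    simpa only [hnegnorm] using hnorm
  have hshift : Summable (fun j : ℕ => (-m) ^ (j + 1)) := (summable_nat_add_iff 1).2 hsm
  refine ⟨hnorm, hsm, ?_, ?_⟩
  · rw [← hsm.tsum_mul_left]
    have hterm : ∀ j : ℕ, (1 + m) * (-m) ^ j = (-m) ^ j - (-m) ^ (j + 1) := by
      intro j
      rw [add_mul, one_mul, pow_succ', neg_mul, sub_neg_eq_add]
    calc ∑' j : ℕ, (1 + m) * (-m) ^ j = ∑' j : ℕ, ((-m) ^ j - (-m) ^ (j + 1)) := by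
          exact tsum_congr hterm
      _ = (∑' j : ℕ, (-m) ^ j) - ∑' j : ℕ, (-m) ^ (j + 1) := hsm.tsum_sub hshift
      _ = 1 := by
          rw [hsm.tsum_eq_zero_add, add_sub_cancel_right, pow_zero]
  · rw [← hsm.tsum_mul_right]
    have hterm : ∀ j : ℕ, (-m) ^ j * (1 + m) = (-m) ^ j - (-m) ^ (j + 1) := by
      intro j
      rw [mul_add, mul_one, pow_succ, mul_neg, sub_neg_eq_add]
    calc ∑' j : ℕ, (-m) ^ j * (1 + m) = ∑' j : ℕ, ((-m) ^ j - (-m) ^ (j + 1)) := by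
          exact tsum_congr hterm
      _ = (∑' j : ℕ, (-m) ^ j) - ∑' j : ℕ, (-m) ^ (j + 1) := hsm.tsum_sub hshift
      _ = 1 := by
          rw [hsm.tsum_eq_zero_add, add_sub_cancel_right, pow_zero]

private lemma key_aux {k n : ℕ} (Φ : Matrix (Fin n) (Fin k) ℝ)
    (D Binv Sm : Matrix (Fin k) (Fin k) ℝ) (r ν w : ℝ) (hw : ν * r = w)
    (hBBinv : (1 + w • D) * Binv = 1)
    (hBinvB : Binv * (1 + w • D) = 1)
    (hcomm : D * Binv = Binv * D)
    (hSm1 : (1 + r • (Binv * D * (Φᵀ * Φ - ν • 1))) * Sm = 1)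
    (hSm2 : Sm * (1 + r • (Binv * D * (Φᵀ * Φ - ν • 1))) = 1) :
    IsUnit ((1 : Matrix (Fin n) (Fin n) ℝ) + r • (Φ * D * Φᵀ)) ∧
      Φᵀ * ((1 : Matrix (Fin n) (Fin n) ℝ) + r • (Φ * D * Φᵀ))⁻¹ * Φ
        = ν • Binv + Binv * (Φᵀ * Φ - ν • 1) * Sm * Binv := by
  set Δ := Φᵀ * Φ - ν • (1 : Matrix (Fin k) (Fin k) ℝ) with hΔdef
  set B := (1 : Matrix (Fin k) (Fin k) ℝ) + w • D with hBdef
  set G := (1 : Matrix (Fin n) (Fin n) ℝ) + r • (Φ * D * Φᵀ) with hGdef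
  set M := r • (Binv * D * Δ) with hMdef
  set M' := r • (Δ * D * Binv) with hM'def
  set H := (1 : Matrix (Fin k) (Fin k) ℝ) + r • (Φᵀ * Φ * D) with hHdef
  have hPhiPhi : Φᵀ * Φ = ν • 1 + Δ := by rw [hΔdef]; module
  have hBunit : IsUnit B := by
    have hd : B.det * Binv.det = 1 := by rw [← Matrix.det_mul, hBBinv, Matrix.det_one]
    exact (Matrix.isUnit_iff_isUnit_det _).2 (IsUnit.of_mul_eq_one _ hd)
  have hMunit : IsUnit ((1 : Matrix (Fin k) (Fin k) ℝ) + M) := by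
    have hd : ((1 : Matrix (Fin k) (Fin k) ℝ) + M).det * Sm.det = 1 := by
      rw [← Matrix.det_mul, hSm1, Matrix.det_one]
    exact (Matrix.isUnit_iff_isUnit_det _).2 (IsUnit.of_mul_eq_one _ hd)
  have hM'M : M' * Δ = Δ * M := by
    rw [hMdef, hM'def, smul_mul_assoc, mul_smul_comm]
    congr 1
    calc Δ * D * Binv * Δ = Δ * ((D * Binv) * Δ) := by simp only [mul_assoc]
      _ = Δ * ((Binv * D) * Δ) := by rw [hcomm]
      _ = Δ * (Binv * D * Δ) := rfl
  have hM'unit : IsUnit ((1 : Matrix (Fin k) (Fin k) ℝ) + M') := by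
    have h1 : (1 : Matrix (Fin k) (Fin k) ℝ) + M' = 1 + Δ * (r • (D * Binv)) := by
      rw [hM'def, mul_smul_comm, ← mul_assoc]
    have h2 : (1 : Matrix (Fin k) (Fin k) ℝ) + M = 1 + (r • (D * Binv)) * Δ := by
      rw [hMdef, smul_mul_assoc, hcomm]
    have hd : ((1 : Matrix (Fin k) (Fin k) ℝ) + M').det
        = ((1 : Matrix (Fin k) (Fin k) ℝ) + M).det := by
      rw [h1, h2, Matrix.det_one_add_mul_comm]
    rw [Matrix.isUnit_iff_isUnit_det, hd, ← Matrix.isUnit_iff_isUnit_det]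
    exact hMunit
  have hM'B : M' * B = r • (Δ * D) := by
    rw [hM'def, smul_mul_assoc]
    congr 1
    calc Δ * D * Binv * B = (Δ * D) * (Binv * B) := by simp only [mul_assoc]
      _ = Δ * D := by rw [hBinvB, mul_one]
  have hHfact : H = (1 + M') * B := by
    calc H = B + r • (Δ * D) := by
          rw [hHdef, hBdef, hPhiPhi, ← hw]
          simp only [add_mul, smul_mul_assoc, one_mul, smul_add, smul_smul]
          module
      _ = (1 + M') * B := by rw [add_mul, one_mul, hM'B]
  have hHunit : IsUnit H := by rw [hHfact]; exact hM'unit.mul hBunit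
  have hGunit : IsUnit G := by
    have hd : G.det = H.det := by
      have e1 : G = 1 + (r • (Φ * D)) * Φᵀ := by
        rw [hGdef, Matrix.smul_mul]
      have e2 : H = 1 + Φᵀ * (r • (Φ * D)) := by
        rw [hHdef, Matrix.mul_smul, ← Matrix.mul_assoc]
      rw [e1, e2, Matrix.det_one_add_mul_comm]
    rw [Matrix.isUnit_iff_isUnit_det, hd, ← Matrix.isUnit_iff_isUnit_det]
    exact hHunit
  refine ⟨hGunit, ?_⟩
  have hGdetu : IsUnit G.det := (Matrix.isUnit_iff_isUnit_det _).1 hGunit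
  have hHphi : H * Φᵀ = Φᵀ * G := by
    rw [hHdef, hGdef, Matrix.add_mul, Matrix.mul_add, Matrix.one_mul, Matrix.mul_one,
      Matrix.smul_mul, Matrix.mul_smul]
    congr 2
    simp only [Matrix.mul_assoc]
  have hHG : H * (Φᵀ * G⁻¹ * Φ) = Φᵀ * Φ := by
    calc H * (Φᵀ * G⁻¹ * Φ) = (H * Φᵀ) * (G⁻¹ * Φ) := by simp only [Matrix.mul_assoc]
      _ = (Φᵀ * G) * (G⁻¹ * Φ) := by rw [hHphi]
      _ = Φᵀ * ((G * G⁻¹) * Φ) := by simp only [Matrix.mul_assoc]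
      _ = Φᵀ * Φ := by rw [Matrix.mul_nonsing_inv _ hGdetu, Matrix.one_mul]
  have hexp : Binv + w • (D * Binv) = 1 := by
    calc Binv + w • (D * Binv) = (1 + w • D) * Binv := by
          rw [add_mul, one_mul, smul_mul_assoc]
      _ = 1 := hBBinv
  have hνM' : ν • M' + Δ * Binv = Δ := by
    calc ν • M' + Δ * Binv = Δ * (w • (D * Binv)) + Δ * Binv := by
          rw [hM'def, smul_smul, hw, mul_smul_comm, mul_assoc]
      _ = Δ * (w • (D * Binv) + Binv) := by rw [← mul_add]
      _ = Δ := by rw [add_comm, hexp, mul_one]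
  have hBmul : B * (ν • Binv + Binv * Δ * Sm * Binv) = ν • 1 + Δ * Sm * Binv := by
    rw [mul_add, mul_smul_comm, hBBinv]
    congr 1
    calc B * (Binv * Δ * Sm * Binv) = B * Binv * Δ * Sm * Binv := by simp only [mul_assoc]
      _ = Δ * Sm * Binv := by rw [hBBinv, one_mul]
  have hM'Δ : (1 + M') * Δ = Δ * (1 + M) := by
    rw [add_mul, one_mul, mul_add, mul_one, hM'M]
  have hHR : H * (ν • Binv + Binv * Δ * Sm * Binv) = Φᵀ * Φ := by
    calc H * (ν • Binv + Binv * Δ * Sm * Binv)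
        = (1 + M') * (B * (ν • Binv + Binv * Δ * Sm * Binv)) := by
          rw [hHfact, mul_assoc]
      _ = (1 + M') * (ν • 1 + Δ * Sm * Binv) := by rw [hBmul]
      _ = ν • (1 + M') + (1 + M') * Δ * (Sm * Binv) := by
          rw [mul_add, mul_smul_comm, mul_one]
          simp only [mul_assoc]
      _ = ν • (1 + M') + Δ * ((1 + M) * Sm) * Binv := by
          rw [hM'Δ]
          simp only [mul_assoc]
      _ = ν • 1 + (ν • M' + Δ * Binv) := by
          rw [hSm1, mul_one, smul_add, add_assoc]
      _ = Φᵀ * Φ := by rw [hνM', hPhiPhi]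
  exact hHunit.mul_left_cancel (hHG.trans hHR.symm)

set_option maxHeartbeats 2000000
set_option synthInstance.maxHeartbeats 400000
/-- **Decomposition of the data-fit term of the stochastic complexity (Lemma C.12).** -/
theorem statement_18 (n R : ℕ) (hn : 1 ≤ n)
    (ℓ : Fin (R + 1) → ℝ) (hℓ : ∀ p, 0 ≤ ℓ p)
    (Φ : Matrix (Fin n) (Fin (R + 1)) ℝ) (μv : Fin (R + 1) → ℝ) (σ : ℝ) (hσ : 0 < σ)
    (hcontr : opNorm ((σ ^ 2)⁻¹ •
        (Matrix.diagonal (fun p => (1 + ((n : ℝ) / σ ^ 2) * ℓ p) ^ (-(1 : ℝ) / 2)) *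
          Matrix.diagonal (fun p => Real.sqrt (ℓ p)) *
          (Φᵀ * Φ - (n : ℝ) • (1 : Matrix (Fin (R + 1)) (Fin (R + 1)) ℝ)) *
          Matrix.diagonal (fun p => Real.sqrt (ℓ p)) *
          Matrix.diagonal (fun p => (1 + ((n : ℝ) / σ ^ 2) * ℓ p) ^ (-(1 : ℝ) / 2)))) < 1) :
    IsUnit ((1 : Matrix (Fin n) (Fin n) ℝ) +
        (σ ^ 2)⁻¹ • (Φ * Matrix.diagonal ℓ * Φᵀ)) ∧
    Summable (fun j : ℕ => |Eterm ℓ Φ μv σ j|) ∧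
    (1 / (2 * σ ^ 2)) *
        ((Φ *ᵥ μv) ⬝ᵥ
          (((1 : Matrix (Fin n) (Fin n) ℝ) +
              (σ ^ 2)⁻¹ • (Φ * Matrix.diagonal ℓ * Φᵀ))⁻¹ *ᵥ (Φ *ᵥ μv)))
      = ((n : ℝ) / (2 * σ ^ 2)) *
          (μv ⬝ᵥ ((1 + ((n : ℝ) / σ ^ 2) • Matrix.diagonal ℓ)⁻¹ *ᵥ μv))
        + (1 / 2) * ∑' j : ℕ, ((-1 : ℝ) ^ j) * Eterm ℓ Φ μv σ j := by
  classical
  have hs2 : (0:ℝ) < σ ^ 2 := by positivity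
  have hb : ∀ p, (0:ℝ) < 1 + (n : ℝ) / σ ^ 2 * ℓ p := fun p =>
    add_pos_of_pos_of_nonneg one_pos (mul_nonneg (by positivity) (hℓ p))
  set r : ℝ := (σ ^ 2)⁻¹ with hr
  set D := Matrix.diagonal ℓ with hD
  set Δ := Φᵀ * Φ - (n : ℝ) • (1 : Matrix (Fin (R + 1)) (Fin (R + 1)) ℝ) with hΔ
  set Binv := Matrix.diagonal (fun p => (1 + (n : ℝ) / σ ^ 2 * ℓ p)⁻¹) with hBinvdef
  have hBdiag : (1 : Matrix (Fin (R + 1)) (Fin (R + 1)) ℝ) + ((n : ℝ) / σ ^ 2) • D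
      = Matrix.diagonal (fun p => 1 + (n : ℝ) / σ ^ 2 * ℓ p) := by
    rw [hD, ← Matrix.diagonal_one, ← Matrix.diagonal_smul, Matrix.diagonal_add]
    refine congrArg Matrix.diagonal (funext fun p => ?_)
    simp [smul_eq_mul]
  have hBBinv : ((1 : Matrix (Fin (R + 1)) (Fin (R + 1)) ℝ) + ((n : ℝ) / σ ^ 2) • D) * Binv
      = 1 := by
    rw [hBdiag, hBinvdef, Matrix.diagonal_mul_diagonal, ← Matrix.diagonal_one]
    exact congrArg Matrix.diagonal (funext fun p => mul_inv_cancel₀ (hb p).ne')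
  have hBinvB : Binv * ((1 : Matrix (Fin (R + 1)) (Fin (R + 1)) ℝ) + ((n : ℝ) / σ ^ 2) • D)
      = 1 := by
    rw [hBdiag, hBinvdef, Matrix.diagonal_mul_diagonal, ← Matrix.diagonal_one]
    exact congrArg Matrix.diagonal (funext fun p => inv_mul_cancel₀ (hb p).ne')
  have hBinv_eq : ((1 : Matrix (Fin (R + 1)) (Fin (R + 1)) ℝ) + ((n : ℝ) / σ ^ 2) • D)⁻¹
      = Binv := Matrix.inv_eq_right_inv hBBinv
  have hcomm : D * Binv = Binv * D := by
    rw [hD, hBinvdef, Matrix.diagonal_mul_diagonal, Matrix.diagonal_mul_diagonal]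
    exact congrArg Matrix.diagonal (funext fun p => mul_comm _ _)
  set C := Matrix.diagonal
      (fun p => Real.sqrt (ℓ p) * (1 + (n : ℝ) / σ ^ 2 * ℓ p) ^ (-(1 : ℝ) / 2)) with hCdef
  have hCC : C * C = Binv * D := by
    rw [hCdef, hBinvdef, hD, Matrix.diagonal_mul_diagonal, Matrix.diagonal_mul_diagonal]
    refine congrArg Matrix.diagonal (funext fun p => ?_)
    have h2 : (1 + (n : ℝ) / σ ^ 2 * ℓ p) ^ (-(1 : ℝ) / 2)
          * (1 + (n : ℝ) / σ ^ 2 * ℓ p) ^ (-(1 : ℝ) / 2)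
        = (1 + (n : ℝ) / σ ^ 2 * ℓ p)⁻¹ := by
      rw [← Real.rpow_add (hb p), show (-(1:ℝ)/2 + -(1:ℝ)/2) = -1 by norm_num,
        Real.rpow_neg_one]
    calc Real.sqrt (ℓ p) * (1 + (n : ℝ) / σ ^ 2 * ℓ p) ^ (-(1 : ℝ) / 2)
          * (Real.sqrt (ℓ p) * (1 + (n : ℝ) / σ ^ 2 * ℓ p) ^ (-(1 : ℝ) / 2))
        = (Real.sqrt (ℓ p) * Real.sqrt (ℓ p)) *
            ((1 + (n : ℝ) / σ ^ 2 * ℓ p) ^ (-(1 : ℝ) / 2)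
              * (1 + (n : ℝ) / σ ^ 2 * ℓ p) ^ (-(1 : ℝ) / 2)) := by ring
      _ = ℓ p * (1 + (n : ℝ) / σ ^ 2 * ℓ p)⁻¹ := by
          rw [Real.mul_self_sqrt (hℓ p), h2]
      _ = (1 + (n : ℝ) / σ ^ 2 * ℓ p)⁻¹ * ℓ p := mul_comm _ _
  -- identify the contraction matrix
  have hD12 : Matrix.diagonal (fun p => (1 + (n : ℝ) / σ ^ 2 * ℓ p) ^ (-(1 : ℝ) / 2))
      * Matrix.diagonal (fun p => Real.sqrt (ℓ p)) = C := by
    rw [hCdef, Matrix.diagonal_mul_diagonal]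
    exact congrArg Matrix.diagonal (funext fun p => mul_comm _ _)
  have hD21 : Matrix.diagonal (fun p => Real.sqrt (ℓ p))
      * Matrix.diagonal (fun p => (1 + (n : ℝ) / σ ^ 2 * ℓ p) ^ (-(1 : ℝ) / 2)) = C := by
    rw [hCdef, Matrix.diagonal_mul_diagonal]
  have hcontr2 : opNorm (r • (C * Δ * C)) < 1 := by
    have heq : Matrix.diagonal (fun p => (1 + ((n : ℝ) / σ ^ 2) * ℓ p) ^ (-(1 : ℝ) / 2)) *
          Matrix.diagonal (fun p => Real.sqrt (ℓ p)) * Δ *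
          Matrix.diagonal (fun p => Real.sqrt (ℓ p)) *
          Matrix.diagonal (fun p => (1 + ((n : ℝ) / σ ^ 2) * ℓ p) ^ (-(1 : ℝ) / 2))
        = C * Δ * C := by
      rw [hD12, mul_assoc (C * Δ), hD21]
    rw [← heq]
    exact hcontr
  set E := Matrix.toEuclideanCLM (𝕜 := ℝ) (n := Fin (R + 1)) with hE
  have ht : ‖E (r • (C * Δ * C))‖ < 1 := hcontr2
  set M₀ := r • (((1 : Matrix (Fin (R + 1)) (Fin (R + 1)) ℝ)
      + ((n : ℝ) / σ ^ 2) • D)⁻¹ * D * Δ) with hM0def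
  have hM0 : M₀ = r • (Binv * D * Δ) := by rw [hM0def, hBinv_eq]
  have hMCX : M₀ = C * (r • (C * Δ)) := by
    rw [hM0, mul_smul_comm, ← mul_assoc, hCC]
  obtain ⟨hnorm, hsm, hS1, hS2⟩ :=
    geom_aux (E C) (E (r • (C * Δ))) (E (r • (C * Δ * C))) (E M₀)
      (by rw [hMCX, _root_.map_mul]) (by rw [← _root_.map_mul, smul_mul_assoc]) ht
  set Sm := E.symm (∑' j : ℕ, (-(E M₀)) ^ j) with hSmdef
  have hESm : E Sm = ∑' j : ℕ, (-(E M₀)) ^ j := E.apply_symm_apply _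
  have hSm1 : ((1 : Matrix (Fin (R + 1)) (Fin (R + 1)) ℝ) + M₀) * Sm = 1 := by
    have h1 := congrArg (⇑E.symm) hS1
    rw [_root_.map_mul, _root_.map_add, _root_.map_one, StarAlgEquiv.symm_apply_apply] at h1
    exact h1
  have hSm2 : Sm * ((1 : Matrix (Fin (R + 1)) (Fin (R + 1)) ℝ) + M₀) = 1 := by
    have h1 := congrArg (⇑E.symm) hS2
    rw [_root_.map_mul, _root_.map_add, _root_.map_one, StarAlgEquiv.symm_apply_apply] at h1
    exact h1
  have hSm1' : ((1 : Matrix (Fin (R + 1)) (Fin (R + 1)) ℝ) + r • (Binv * D * Δ)) * Sm = 1 := by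
    rw [← hM0]; exact hSm1
  have hSm2' : Sm * ((1 : Matrix (Fin (R + 1)) (Fin (R + 1)) ℝ) + r • (Binv * D * Δ)) = 1 := by
    rw [← hM0]; exact hSm2
  obtain ⟨hGunit, hKEY⟩ :=
    key_aux Φ D Binv Sm r (n : ℝ) ((n : ℝ) / σ ^ 2) (by rw [hr, div_eq_mul_inv])
      hBBinv hBinvB hcomm hSm1' hSm2'
  -- the continuous linear functional
  set P₀ := r • (((1 : Matrix (Fin (R + 1)) (Fin (R + 1)) ℝ)
      + ((n : ℝ) / σ ^ 2) • D)⁻¹ * Δ) with hP0def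
  set Q₀ := ((1 : Matrix (Fin (R + 1)) (Fin (R + 1)) ℝ)
      + ((n : ℝ) / σ ^ 2) • D)⁻¹ with hQ0def
  let ψlin : (EuclideanSpace ℝ (Fin (R + 1)) →L[ℝ] EuclideanSpace ℝ (Fin (R + 1))) →ₗ[ℝ] ℝ :=
    { toFun := fun a => μv ⬝ᵥ ((P₀ * (E.symm a) * Q₀) *ᵥ μv)
      map_add' := fun a b => by
        simp only [_root_.map_add, mul_add, add_mul, Matrix.add_mulVec, dotProduct_add]
      map_smul' := fun rr a => by
        simp only [_root_.map_smul, mul_smul_comm, smul_mul_assoc, Matrix.smul_mulVec,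
          dotProduct_smul, smul_eq_mul, RingHom.id_apply] }
  let ψ := LinearMap.toContinuousLinearMap ψlin
  have hψ : ∀ A : Matrix (Fin (R + 1)) (Fin (R + 1)) ℝ,
      ψ (E A) = μv ⬝ᵥ ((P₀ * A * Q₀) *ᵥ μv) := by
    intro A
    show ψlin (E A) = _
    simp only [ψlin, LinearMap.coe_mk, AddHom.coe_mk, StarAlgEquiv.symm_apply_apply]
  have hEt0 : ∀ j : ℕ, Eterm ℓ Φ μv σ j = μv ⬝ᵥ ((P₀ * M₀ ^ j * Q₀) *ᵥ μv) := fun j => rfl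
  have hEt : ∀ j : ℕ, Eterm ℓ Φ μv σ j = ψ ((E M₀) ^ j) := by
    intro j
    rw [← _root_.map_pow, hψ]
    exact hEt0 j
  have habs : Summable (fun j : ℕ => |Eterm ℓ Φ μv σ j|) := by
    refine Summable.of_nonneg_of_le (fun j => abs_nonneg _) (fun j => ?_) (hnorm.mul_left ‖ψ‖)
    rw [hEt j]
    calc |ψ ((E M₀) ^ j)| = ‖ψ ((E M₀) ^ j)‖ := (Real.norm_eq_abs _).symm
      _ ≤ ‖ψ‖ * ‖(E M₀) ^ j‖ := ψ.le_opNorm _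
  refine ⟨hGunit, habs, ?_⟩
  have hterm : ∀ j : ℕ, (-1 : ℝ) ^ j * Eterm ℓ Φ μv σ j = ψ ((-(E M₀)) ^ j) := by
    intro j
    have h1 : (-(E M₀)) ^ j = E ((-1 : ℝ) ^ j • M₀ ^ j) := by
      rw [← _root_.map_neg, ← _root_.map_pow, ← neg_one_smul ℝ M₀, smul_pow]
    rw [h1, hψ, hEt0 j, mul_smul_comm ((-1 : ℝ) ^ j) P₀ (M₀ ^ j),
      smul_mul_assoc ((-1 : ℝ) ^ j) (P₀ * M₀ ^ j) Q₀,
      Matrix.smul_mulVec ((-1 : ℝ) ^ j) (P₀ * M₀ ^ j * Q₀) μv,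
      dotProduct_smul, smul_eq_mul]
  have htsum : ∑' j : ℕ, (-1 : ℝ) ^ j * Eterm ℓ Φ μv σ j = μv ⬝ᵥ ((P₀ * Sm * Q₀) *ᵥ μv) := by
    rw [tsum_congr hterm, ← ψ.map_tsum hsm, ← hESm, hψ]
  rw [htsum]
  have hdot : (Φ *ᵥ μv) ⬝ᵥ (((1 : Matrix (Fin n) (Fin n) ℝ) + r • (Φ * D * Φᵀ))⁻¹
        *ᵥ (Φ *ᵥ μv))
      = μv ⬝ᵥ ((Φᵀ * ((1 : Matrix (Fin n) (Fin n) ℝ) + r • (Φ * D * Φᵀ))⁻¹ * Φ) *ᵥ μv) := by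
    rw [Matrix.mulVec_mulVec, show Φ *ᵥ μv = μv ᵥ* Φᵀ from (Matrix.vecMul_transpose Φ μv).symm,
      ← Matrix.dotProduct_mulVec, Matrix.mulVec_mulVec, ← Matrix.mul_assoc]
  rw [hdot, hKEY, hBinv_eq]
  have hPSQ : P₀ * Sm * Binv = r • (Binv * Δ * Sm * Binv) := by
    rw [hP0def, hBinv_eq, smul_mul_assoc, smul_mul_assoc]
  rw [hPSQ]
  rw [Matrix.add_mulVec, Matrix.smul_mulVec, Matrix.smul_mulVec,
    dotProduct_add, dotProduct_smul, dotProduct_smul, smul_eq_mul, smul_eq_mul]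
  rw [hr]
  field_simp
  rfl
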